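/- The function V̂ defined by V̂(φ) = −(φ* − φ)/(c(1+φ*)) − (2/μ²)(1+φ) ∫_{φ*/(1+φ*)}^{φ/(1+φ)} ((1−v)/v)^κ e^{κ/v} ∫₀^v u^{κ−1}/(1−u)^{κ+2} e^{−κ/u} du dv satisfies λ(1+φ) V̂'(φ) + (μ²/2) φ² V̂''(φ) − λ V̂(φ) = −(φ − λ/c) for all φ ∈ (0, φ*). -/

import Mathlib

open Real Set intervalIntegral Filter MeasureTheory

noncomputable def fI (κ : ℝ) : ℝ → ℝ :=
  fun u => u ^ (κ - 1) * (1 - u) ^ (-(κ + 2)) * Real.exp (-κ / u)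

lemma fI_contAt (κ : ℝ) {u : ℝ} (hu0 : 0 < u) (hu1 : u < 1) :
    ContinuousAt (fI κ) u := by
  have h1 : ContinuousAt (fun u : ℝ => u ^ (κ - 1)) u :=
    Real.continuousAt_rpow_const u _ (Or.inl hu0.ne')
  have h2 : ContinuousAt (fun u : ℝ => (1 - u) ^ (-(κ + 2))) u := by
    have : ContinuousAt (fun u : ℝ => (1 : ℝ) - u) u := by fun_prop
    exact (Real.continuousAt_rpow_const _ _ (Or.inl (by simp; linarith))).comp this
  have h3 : ContinuousAt (fun u : ℝ => Real.exp (-κ / u)) u :=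
    (Real.continuous_exp.continuousAt).comp (ContinuousAt.div continuousAt_const continuousAt_id hu0.ne')
  exact (h1.mul h2).mul h3

lemma fI_tendsto (κ : ℝ) (hκ : 0 < κ) : Tendsto (fI κ) (nhdsWithin 0 (Set.Ioi 0)) (nhds 0) := by
  have key : Tendsto (fun u : ℝ => (u⁻¹) ^ (1 - κ) * Real.exp (-κ * u⁻¹))
      (nhdsWithin 0 (Set.Ioi 0)) (nhds 0) :=
    (tendsto_rpow_mul_exp_neg_mul_atTop_nhds_zero (1 - κ) κ hκ).comp tendsto_inv_nhdsGT_zero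
  have h2 : Tendsto (fun u : ℝ => (1 - u) ^ (-(κ + 2))) (nhdsWithin 0 (Set.Ioi 0)) (nhds 1) := by
    have hc : ContinuousAt (fun u : ℝ => (1 - u) ^ (-(κ + 2))) 0 := by
      have hc' : ContinuousAt (fun u : ℝ => (1 : ℝ) - u) 0 := by fun_prop
      exact (Real.continuousAt_rpow_const _ _ (Or.inl (by norm_num))).comp hc'
    have := hc.tendsto.mono_left (nhdsWithin_le_nhds (s := Set.Ioi 0))
    simpa using this
  have h3 := key.mul h2
  rw [zero_mul] at h3
  apply h3.congr'
  filter_upwards [self_mem_nhdsWithin] with u hu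
  have hu : (0:ℝ) < u := hu
  have e1 : (u⁻¹) ^ (1 - κ) = u ^ (κ - 1) := by
    rw [Real.inv_rpow hu.le, ← Real.rpow_neg hu.le]
    norm_num
  simp only [fI, e1, neg_mul, mul_inv_eq_iff_eq_mul]
  rw [div_eq_mul_inv]
  ring_nf

lemma fI_intervalIntegrable (κ : ℝ) (hκ : 0 < κ) {v : ℝ} (hv0 : 0 < v) (hv1 : v < 1) :
    IntervalIntegrable (fI κ) MeasureTheory.volume 0 v := by
  set f₀ : ℝ → ℝ := fun u => if u ≤ 0 then 0 else fI κ u with hf₀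
  have hcont : ContinuousOn f₀ (Set.Icc 0 v) := by
    intro u hu
    rcases eq_or_lt_of_le hu.1 with h0 | h0
    · subst h0
      have hten : Tendsto f₀ (nhdsWithin 0 (Set.Ici 0)) (nhds 0) := by
      -- Ici 0 = {0} ∪ Ioi 0
        have hs : (Set.Ici (0:ℝ)) = {0} ∪ Set.Ioi 0 := by
          ext x; simp [le_iff_lt_or_eq, or_comm, eq_comm]
        rw [hs, nhdsWithin_union, tendsto_sup]
        constructor
        · rw [nhdsWithin_singleton]
          simpa [hf₀] using tendsto_pure_nhds f₀ 0 |>.congr (fun _ => rfl) |>.mono_right le_rfl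
        · refine (fI_tendsto κ hκ).congr' ?_
          filter_upwards [self_mem_nhdsWithin] with x hx
          have : (0:ℝ) < x := hx
          simp [hf₀, not_le.mpr this]
      have : ContinuousWithinAt f₀ (Set.Ici 0) 0 := by
        unfold ContinuousWithinAt
        simpa [hf₀] using hten
      exact (this.mono (Set.Icc_subset_Ici_self)).mono_of_mem_nhdsWithin (by exact self_mem_nhdsWithin)
    · have hAt : ContinuousAt f₀ u := by
        have hev : f₀ =ᶠ[nhds u] fI κ := by
          filter_upwards [IsOpen.mem_nhds isOpen_Ioi h0] with x hx
          simp [hf₀, not_le.mpr (Set.mem_Ioi.mp hx)]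
        exact (fI_contAt κ h0 (lt_of_le_of_lt hu.2 hv1)).congr hev.symm
      exact hAt.continuousWithinAt
  have hint0 : MeasureTheory.IntegrableOn f₀ (Set.Icc 0 v) := hcont.integrableOn_Icc
  rw [intervalIntegrable_iff_integrableOn_Ioc_of_le hv0.le]
  refine (hint0.mono_set Set.Ioc_subset_Icc_self).congr_fun ?_ measurableSet_Ioc
  intro x hx
  simp [hf₀, not_le.mpr hx.1]

noncomputable def FI (κ : ℝ) : ℝ → ℝ := fun v => ∫ u in (0:ℝ)..v, fI κ u

lemma FI_hasDerivAt (κ : ℝ) (hκ : 0 < κ) {v : ℝ} (hv0 : 0 < v) (hv1 : v < 1) :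
    HasDerivAt (FI κ) (fI κ v) v := by
  refine intervalIntegral.integral_hasDerivAt_right
    (fI_intervalIntegrable κ hκ hv0 hv1) ?_ (fI_contAt κ hv0 hv1)
  have hco : ContinuousOn (fI κ) (Set.Ioo 0 1) :=
    fun u hu => (fI_contAt κ hu.1 hu.2).continuousWithinAt
  exact hco.stronglyMeasurableAtFilter isOpen_Ioo v ⟨hv0, hv1⟩

noncomputable def hI (κ : ℝ) : ℝ → ℝ := fun v => ((1 - v) / v) ^ κ * Real.exp (κ / v)

noncomputable def hI' (κ v : ℝ) : ℝ :=
  κ * ((1 - v) / v) ^ (κ - 1) * (-1 / v ^ 2) * Real.exp (κ / v)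
    + ((1 - v) / v) ^ κ * (Real.exp (κ / v) * (-(κ / v ^ 2)))

lemma hI_hasDerivAt (κ : ℝ) {v : ℝ} (hv0 : 0 < v) (hv1 : v < 1) :
    HasDerivAt (hI κ) (hI' κ v) v := by
  have hr : HasDerivAt (fun v : ℝ => (1 - v) / v) (-1 / v ^ 2) v := by
    have h1 : HasDerivAt (fun v : ℝ => (1 : ℝ) - v) (-1) v := by
      simpa using (hasDerivAt_id v).const_sub 1
    have := h1.div (hasDerivAt_id v) hv0.ne'
    refine this.congr_deriv ?_
    simp only [id_eq]
    field_simp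
    ring
  have hrpos : (0:ℝ) < (1 - v) / v := div_pos (by linarith) hv0
  have hp : HasDerivAt (fun v : ℝ => ((1 - v) / v) ^ κ)
      (κ * ((1 - v) / v) ^ (κ - 1) * (-1 / v ^ 2)) v := by
    have := hr.rpow_const (p := κ) (Or.inl hrpos.ne')
    convert this using 1
    ring
  have he : HasDerivAt (fun v : ℝ => Real.exp (κ / v)) (Real.exp (κ / v) * (-(κ / v ^ 2))) v := by
    have hq : HasDerivAt (fun v : ℝ => κ / v) (-(κ / v ^ 2)) v := by
      have h0 := (hasDerivAt_inv hv0.ne').const_mul κ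
      have e : κ * -(v ^ 2)⁻¹ = -(κ / v ^ 2) := by field_simp
      rw [e] at h0
      exact h0.congr_of_eventuallyEq
        (Filter.Eventually.of_forall fun x => by simp [div_eq_mul_inv])
    exact hq.exp
  have h2 := hp.mul he
  have e : κ * ((1 - v) / v) ^ (κ - 1) * (-1 / v ^ 2) * Real.exp (κ / v)
      + ((1 - v) / v) ^ κ * (Real.exp (κ / v) * (-(κ / v ^ 2))) = hI' κ v := by
    unfold hI'; ring
  rw [e] at h2
  exact h2

noncomputable def gI (κ : ℝ) : ℝ → ℝ := fun v => hI κ v * FI κ v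

noncomputable def gI' (κ v : ℝ) : ℝ := hI' κ v * FI κ v + hI κ v * fI κ v

lemma gI_hasDerivAt (κ : ℝ) (hκ : 0 < κ) {v : ℝ} (hv0 : 0 < v) (hv1 : v < 1) :
    HasDerivAt (gI κ) (gI' κ v) v :=
  (hI_hasDerivAt κ hv0 hv1).mul (FI_hasDerivAt κ hκ hv0 hv1)

lemma gI_contOn (κ : ℝ) (hκ : 0 < κ) : ContinuousOn (gI κ) (Set.Ioo 0 1) := by
  intro v hv
  exact ((gI_hasDerivAt κ hκ hv.1 hv.2).continuousAt).continuousWithinAt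

noncomputable def GI (κ a : ℝ) : ℝ → ℝ := fun x => ∫ v in a..x, gI κ v

lemma GI_hasDerivAt (κ : ℝ) (hκ : 0 < κ) {a x : ℝ} (ha : a ∈ Set.Ioo (0:ℝ) 1)
    (hx : x ∈ Set.Ioo (0:ℝ) 1) : HasDerivAt (GI κ a) (gI κ x) x := by
  have hsub : Set.uIcc a x ⊆ Set.Ioo (0:ℝ) 1 :=
    (Set.ordConnected_Ioo).uIcc_subset ha hx
  have hint : IntervalIntegrable (gI κ) MeasureTheory.volume a x :=
    ((gI_contOn κ hκ).mono hsub).intervalIntegrable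
  refine intervalIntegral.integral_hasDerivAt_right hint ?_
    ((gI_hasDerivAt κ hκ hx.1 hx.2).continuousAt)
  exact (gI_contOn κ hκ).stronglyMeasurableAtFilter isOpen_Ioo x hx


/-- the candidate value function `V̂` solves the free-boundary
ODE `λ(1+φ) V̂' + (μ²/2) φ² V̂'' − λ V̂ = −(φ − λ/c)` on `(0, φ*)`. -/
theorem stmt10 (lam μ c : ℝ) (hlam : 0 < lam) (hμ : μ ≠ 0) (hc : 0 < c)
    (κ : ℝ) (hκ : κ = 2 * lam / μ ^ 2)
    (φs : ℝ) (hφs : lam / c < φs)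
    (V : ℝ → ℝ)
    (hV : ∀ φ : ℝ, V φ =
      -((φs - φ) / (c * (1 + φs)))
      - 2 / μ ^ 2 * (1 + φ) *
        ∫ v in (φs / (1 + φs))..(φ / (1 + φ)),
          ((1 - v) / v) ^ κ * Real.exp (κ / v) *
            ∫ u in (0:ℝ)..v, u ^ (κ - 1) * (1 - u) ^ (-(κ + 2)) * Real.exp (-κ / u)) :
    ∀ φ ∈ Set.Ioo (0:ℝ) φs,
      lam * (1 + φ) * deriv V φ + μ ^ 2 / 2 * φ ^ 2 * deriv (deriv V) φ
        - lam * V φ = -(φ - lam / c) := by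
  have hμ2 : (0:ℝ) < μ ^ 2 := by positivity
  have hκpos : 0 < κ := by rw [hκ]; positivity
  have hφs0 : 0 < φs := lt_trans (by positivity) hφs
  set a : ℝ := φs / (1 + φs) with ha_def
  have h1φs : (0:ℝ) < 1 + φs := by linarith
  have haIoo : a ∈ Set.Ioo (0:ℝ) 1 := ⟨by positivity, by rw [div_lt_one h1φs]; linarith⟩
  have hVeq : ∀ x : ℝ, V x = -((φs - x) / (c * (1 + φs)))
      - 2 / μ ^ 2 * (1 + x) * GI κ a (x / (1 + x)) := fun x => hV x
  -- membership of ψ x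
  have hmem : ∀ x : ℝ, 0 < x → x / (1 + x) ∈ Set.Ioo (0:ℝ) 1 := by
    intro x hx
    have h1x : (0:ℝ) < 1 + x := by linarith
    exact ⟨by positivity, by rw [div_lt_one h1x]; linarith⟩
  have hψ : ∀ x : ℝ, 0 < x → HasDerivAt (fun y : ℝ => y / (1 + y)) (1 / (1 + x) ^ 2) x := by
    intro x hx
    have h1x : (1:ℝ) + x ≠ 0 := by positivity
    have := (hasDerivAt_id x).div ((hasDerivAt_id x).const_add 1) h1x
    simp only [id_eq] at this
    refine this.congr_deriv ?_
    ring
  -- first derivative of V on Ioi 0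
  have hdV : ∀ x : ℝ, 0 < x → HasDerivAt V
      (1 / (c * (1 + φs)) - 2 / μ ^ 2 *
        (GI κ a (x / (1 + x)) + gI κ (x / (1 + x)) * (1 + x)⁻¹)) x := by
    intro x hx
    have h1x : (0:ℝ) < 1 + x := by linarith
    have p1 : HasDerivAt (fun y : ℝ => -((φs - y) / (c * (1 + φs))))
        (1 / (c * (1 + φs))) x := by
      have := (((hasDerivAt_id x).const_sub φs).div_const (c * (1 + φs))).neg
      refine this.congr_deriv ?_
      ring
    have p2 : HasDerivAt (fun y : ℝ => GI κ a (y / (1 + y)))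
        (gI κ (x / (1 + x)) * (1 / (1 + x) ^ 2)) x :=
      by have h := (GI_hasDerivAt κ hκpos haIoo (hmem x hx)).comp x (hψ x hx); exact h
    have p3 : HasDerivAt (fun y : ℝ => 2 / μ ^ 2 * (1 + y) * GI κ a (y / (1 + y)))
        (2 / μ ^ 2 * (GI κ a (x / (1 + x)) + gI κ (x / (1 + x)) * (1 + x)⁻¹)) x := by
      have q := (((hasDerivAt_id x).const_add 1).const_mul (2 / μ ^ 2)).mul p2
      refine q.congr_deriv ?_
      simp only [id_eq]
      field_simp
    have := p1.sub p3
    exact this.congr_of_eventuallyEq (Filter.Eventually.of_forall fun y => by rw [hVeq y]; rfl)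
  intro φ hφ
  obtain ⟨hφ0, hφs'⟩ := hφ
  have h1φ : (0:ℝ) < 1 + φ := by linarith
  set v : ℝ := φ / (1 + φ) with hv_def
  have hvIoo : v ∈ Set.Ioo (0:ℝ) 1 := hmem φ hφ0
  obtain ⟨hv0, hv1⟩ := hvIoo
  -- deriv V φ
  have hd1 : deriv V φ = 1 / (c * (1 + φs)) - 2 / μ ^ 2 * (GI κ a v + gI κ v * (1 + φ)⁻¹) :=
    (hdV φ hφ0).deriv
  -- second derivative
  have hEv : deriv V =ᶠ[nhds φ] fun x =>
      1 / (c * (1 + φs)) - 2 / μ ^ 2 * (GI κ a (x / (1 + x)) + gI κ (x / (1 + x)) * (1 + x)⁻¹) := by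
    filter_upwards [IsOpen.mem_nhds isOpen_Ioi hφ0] with x hx
    exact (hdV x hx).deriv
  have hW' : HasDerivAt (fun x : ℝ =>
      1 / (c * (1 + φs)) - 2 / μ ^ 2 * (GI κ a (x / (1 + x)) + gI κ (x / (1 + x)) * (1 + x)⁻¹))
      (-(2 / μ ^ 2) * (gI' κ v / (1 + φ) ^ 3)) φ := by
    have q1 : HasDerivAt (fun y : ℝ => GI κ a (y / (1 + y))) (gI κ v * (1 / (1 + φ) ^ 2)) φ :=
      by have h := (GI_hasDerivAt κ hκpos haIoo ⟨hv0, hv1⟩).comp φ (hψ φ hφ0); exact h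
    have q2 : HasDerivAt (fun y : ℝ => gI κ (y / (1 + y))) (gI' κ v * (1 / (1 + φ) ^ 2)) φ :=
      by have h := (gI_hasDerivAt κ hκpos hv0 hv1).comp φ (hψ φ hφ0); exact h
    have q3 : HasDerivAt (fun y : ℝ => (1 + y)⁻¹) (-1 / (1 + φ) ^ 2) φ := by
      have := ((hasDerivAt_id φ).const_add 1).inv h1φ.ne'
      simp only [id_eq] at this
      exact this
    have q4 := ((q1.add (q2.mul q3)).const_mul (2 / μ ^ 2)).const_sub (1 / (c * (1 + φs)))
    refine q4.congr_deriv ?_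
    have hgg := gI_hasDerivAt κ hκpos hv0 hv1
    field_simp
    ring
  have hd2 : deriv (deriv V) φ = -(2 / μ ^ 2) * (gI' κ v / (1 + φ) ^ 3) := by
    rw [Filter.EventuallyEq.deriv_eq hEv]
    exact hW'.deriv
  rw [hd1, hd2, hVeq φ]
  simp only [gI, gI', hI, hI', fI]
  have h1v : (0:ℝ) < 1 - v := by linarith
  have hr0 : (0:ℝ) < (1 - v) / v := div_pos h1v hv0
  have e4 : (1 - v) ^ (-(κ + 2)) = ((1 - v) ^ κ * (1 - v) ^ 2)⁻¹ := by
    rw [Real.rpow_neg h1v.le, Real.rpow_add h1v]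
    norm_num
  rw [Real.rpow_sub_one hr0.ne' κ, Real.div_rpow h1v.le hv0.le,
    Real.rpow_sub_one hv0.ne' κ, e4,
    show Real.exp (-κ / v) = (Real.exp (κ / v))⁻¹ from by rw [neg_div, Real.exp_neg],
    ← hv_def]
  have hPpos : 0 < v ^ κ := Real.rpow_pos_of_pos hv0 κ
  have hQpos : 0 < (1 - v) ^ κ := Real.rpow_pos_of_pos h1v κ
  have hEpos : 0 < Real.exp (κ / v) := Real.exp_pos _
  generalize hP : v ^ κ = P
  rw [hP] at hPpos
  generalize hQ : (1 - v) ^ κ = Q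
  rw [hQ] at hQpos
  generalize hE : Real.exp (κ / v) = E
  rw [hE] at hEpos
  generalize hF : FI κ v = Fv
  generalize hG : GI κ a v = Gv
  rw [hv_def]
  have hlam2 : lam = κ * μ ^ 2 / 2 := by rw [hκ]; field_simp
  rw [hlam2]
  have hμ2' : (μ:ℝ) ^ 2 ≠ 0 := hμ2.ne'
  field_simp
  ring
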